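/- arXiv:2601.18794 — 2 statements merged into one kernel-verified Lean document; each statement's English description precedes it below -/
import Mathlib

section
/- For integers n ≥ 3 and 1 ≤ k ≤ n−2, the function f̂(t) = sqrt((k − (n−1)t²)/(n−k−1)) satisfies the capillary cone ODE (1+f²)((1−t²)f'' + (n−1)(f − t f')) + (n−2)(1−t²)(f')²(f − t f') + (k−1)t⁻¹ f'(1 + f² + (1−t²)(f')²) = 0 for all t in the open interval (0, sqrt(k/(n−1))). -/
set_option maxHeartbeats 1000000


/-- The Lawson profile `f̂(t) = √((k − (n−1)t²)/(n−k−1))`. -/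
noncomputable def lawsonProfile (n k : ℕ) : ℝ → ℝ :=
  fun t => Real.sqrt (((k : ℝ) - ((n : ℝ) - 1) * t ^ 2) / ((n : ℝ) - (k : ℝ) - 1))

noncomputable def lawsonProf (N K : ℝ) : ℝ → ℝ :=
  fun t => Real.sqrt ((K - (N - 1) * t ^ 2) / (N - K - 1))

theorem lawson_aux (N K : ℝ) (hN3 : 3 ≤ N) (hK1 : 1 ≤ K) (hKN : K + 2 ≤ N) :
    ∀ t ∈ Set.Ioo (0 : ℝ) (Real.sqrt (K / (N - 1))),
      (1 + lawsonProf N K t ^ 2) *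
          ((1 - t ^ 2) * deriv (deriv (lawsonProf N K)) t
            + (N - 1) * (lawsonProf N K t - t * deriv (lawsonProf N K) t))
        + (N - 2) * (1 - t ^ 2) * (deriv (lawsonProf N K) t) ^ 2 *
            (lawsonProf N K t - t * deriv (lawsonProf N K) t)
        + (K - 1) * t⁻¹ * deriv (lawsonProf N K) t *
            (1 + lawsonProf N K t ^ 2 + (1 - t ^ 2) * (deriv (lawsonProf N K) t) ^ 2)
        = 0 := by
  rintro t ⟨ht0, ht1⟩
  have hm : (0 : ℝ) < N - K - 1 := by linarith
  have hN1 : (0 : ℝ) < N - 1 := by linarith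
  have hfg : lawsonProf N K = fun x => Real.sqrt ((fun x => (K - (N - 1) * x ^ 2) / (N - K - 1)) x) := rfl
  have hfval0 : lawsonProf N K t = Real.sqrt ((fun x => (K - (N - 1) * x ^ 2) / (N - K - 1)) t) := rfl
  set g : ℝ → ℝ := fun x => (K - (N - 1) * x ^ 2) / (N - K - 1) with hg
  have ht2 : t ^ 2 < K / (N - 1) := (Real.lt_sqrt ht0.le).mp ht1
  have hgt : 0 < g t := by
    have h := (lt_div_iff₀ hN1).mp ht2
    have : (N - 1) * t ^ 2 < K := by nlinarith [h]
    exact div_pos (by linarith) hm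
  have hgd : ∀ x : ℝ, HasDerivAt g (-((N - 1) * (2 * x)) / (N - K - 1)) x := by
    intro x
    have h1 : HasDerivAt (fun x : ℝ => K - (N - 1) * x ^ 2) (-((N - 1) * (2 * x))) x := by
      simpa using (((hasDerivAt_pow 2 x).const_mul (N - 1)).const_sub K)
    exact h1.div_const _
  have hDf : ∀ x : ℝ, 0 < g x →
      HasDerivAt (lawsonProf N K) (-(N - 1) * x / ((N - K - 1) * Real.sqrt (g x))) x := by
    intro x hx
    have hs : Real.sqrt (g x) ≠ 0 := (Real.sqrt_pos.mpr hx).ne'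
    have h2 := (Real.hasDerivAt_sqrt hx.ne').comp x (hgd x)
    rw [hfg]
    refine h2.congr_deriv ?_
    field_simp
  have hcont : Continuous g := by
    apply Continuous.div_const
    continuity
  have he : ∀ᶠ x in nhds t, 0 < g x := (isOpen_lt continuous_const hcont).mem_nhds hgt
  have hDeq : deriv (lawsonProf N K) =ᶠ[nhds t]
      (fun x => -(N - 1) * x / ((N - K - 1) * Real.sqrt (g x))) :=
    he.mono fun x hx => (hDf x hx).deriv
  have hs2' : Real.sqrt (g t) ^ 2 = g t := Real.sq_sqrt hgt.le
  set s : ℝ := Real.sqrt (g t) with hsdef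
  have hs0 : 0 < s := Real.sqrt_pos.mpr hgt
  have hs2 : (N - K - 1) * s ^ 2 = K - (N - 1) * t ^ 2 := by
    rw [hs2', hg]
    field_simp
  have hfval : lawsonProf N K t = s := hfval0
  have hd1 : deriv (lawsonProf N K) t = -(N - 1) * t / ((N - K - 1) * s) :=
    (hDf t hgt).deriv
  have hvne : (N - K - 1) * s ≠ 0 := by positivity
  have hu : HasDerivAt (fun x : ℝ => -(N - 1) * x) (-(N - 1)) t := by
    simpa using (hasDerivAt_id t).const_mul (-(N - 1))
  have hv : HasDerivAt (fun x : ℝ => (N - K - 1) * Real.sqrt (g x))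
      ((N - K - 1) * (1 / (2 * s) * (-((N - 1) * (2 * t)) / (N - K - 1)))) t :=
    ((Real.hasDerivAt_sqrt hgt.ne').comp t (hgd t)).const_mul _
  have hquot := hu.div hv hvne
  have hsne : s ≠ 0 := hs0.ne'
  have hmne : N - K - 1 ≠ 0 := hm.ne'
  have htne : t ≠ 0 := ht0.ne'
  have hd2 : deriv (deriv (lawsonProf N K)) t = -(N - 1) * K / ((N - K - 1) ^ 2 * s ^ 3) := by
    rw [hDeq.deriv_eq, show (fun x => -(N - 1) * x / ((N - K - 1) * √(g x))) = ((fun x => -(N - 1) * x) / fun x => (N - K - 1) * √(g x)) from rfl, hquot.deriv, ← hsdef]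
    clear_value s
    clear hDeq hquot hv hu hDf hgd hfg hfval0 hfval hd1 he hcont hs2'
    field_simp
    linear_combination (-1) * hs2
  rw [hfval, hd1, hd2]
  clear_value s
  clear hDeq hquot hv hu hDf hgd hfg hfval0 hfval hd1 hd2 he hcont hs2'
  field_simp
  linear_combination ((N-1)*((1+s^2)*(N-K-1)*((N-K-1)*s^2) + t^2*(1-t^2)*(N-1)*(N-2) + (N-K-1)*(1+s^2-t^2))) * hs2

/-- The Lawson profile satisfies the capillary cone ODE on `(0, √(k/(n−1)))`. -/
theorem stmt_0 (n k : ℕ) (hn : 3 ≤ n) (hk1 : 1 ≤ k) (hk2 : k + 2 ≤ n) :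
    ∀ t ∈ Set.Ioo (0 : ℝ) (Real.sqrt ((k : ℝ) / ((n : ℝ) - 1))),
      (1 + lawsonProfile n k t ^ 2) *
          ((1 - t ^ 2) * deriv (deriv (lawsonProfile n k)) t
            + ((n : ℝ) - 1) * (lawsonProfile n k t - t * deriv (lawsonProfile n k) t))
        + ((n : ℝ) - 2) * (1 - t ^ 2) * (deriv (lawsonProfile n k) t) ^ 2 *
            (lawsonProfile n k t - t * deriv (lawsonProfile n k) t)
        + ((k : ℝ) - 1) * t⁻¹ * deriv (lawsonProfile n k) t *
            (1 + lawsonProfile n k t ^ 2 + (1 - t ^ 2) * (deriv (lawsonProfile n k) t) ^ 2)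
        = 0 := by
  have hfe : lawsonProfile n k = lawsonProf n k := rfl
  rw [hfe]
  exact lawson_aux (n : ℝ) (k : ℝ) (by exact_mod_cast hn) (by exact_mod_cast hk1)
    (by exact_mod_cast hk2)
end

section
/- Let n ≥ 3, 1 ≤ k ≤ n−2, set α = (k−1)/(n−2), A(t) = t − α/t, and let L f := (1−t²)f'' + (n−1)(f − t f') + (k−1)t⁻¹ f'. Then for any C² function f on an interval not containing 0, the function h := f − A f' satisfies (1−t²)h' = A((n−1)h − L f) − α(1−α)t⁻² f'. -/
/-- With `α = (k−1)/(n−2)`, `A(t) = t − α/t`, `L f = (1−t²)f'' + (n−1)(f − t f') + (k−1)t⁻¹ f'`,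
and `h = f − A f'`, one has `(1−t²)h' = A((n−1)h − L f) − α(1−α)t⁻² f'` pointwise on any
`I ⊆ (0,1)`. -/
theorem stmt_4 (n k : ℕ) (hn : 3 ≤ n) (hk1 : 1 ≤ k) (hk2 : k + 2 ≤ n)
    (f f' f'' : ℝ → ℝ) (I : Set ℝ) (hI : I ⊆ Set.Ioo (0 : ℝ) 1)
    (hder1 : ∀ t ∈ I, HasDerivAt f (f' t) t)
    (hder2 : ∀ t ∈ I, HasDerivAt f' (f'' t) t) :
    ∀ t ∈ I,
      (1 - t ^ 2) *
          deriv (fun s => f s - (s - (((k : ℝ) - 1) / ((n : ℝ) - 2)) / s) * f' s) t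
        = (t - (((k : ℝ) - 1) / ((n : ℝ) - 2)) / t) *
            (((n : ℝ) - 1) * (f t - (t - (((k : ℝ) - 1) / ((n : ℝ) - 2)) / t) * f' t)
              - ((1 - t ^ 2) * f'' t + ((n : ℝ) - 1) * (f t - t * f' t)
                  + ((k : ℝ) - 1) * t⁻¹ * f' t))
          - (((k : ℝ) - 1) / ((n : ℝ) - 2)) * (1 - ((k : ℝ) - 1) / ((n : ℝ) - 2)) *
              f' t / t ^ 2 := by
  intro t ht
  set α : ℝ := (((k : ℝ) - 1) / ((n : ℝ) - 2)) with hα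
  have ht0 : (0 : ℝ) < t := (hI ht).1
  have htne : t ≠ 0 := ne_of_gt ht0
  have hn2 : ((n : ℝ) - 2) ≠ 0 := by
    have : (3 : ℝ) ≤ (n : ℝ) := by exact_mod_cast hn
    linarith
  have hA : HasDerivAt (fun s : ℝ => s - α / s) (1 + α / t ^ 2) t := by
    have h1 : HasDerivAt (fun s : ℝ => α / s) (-(α / t ^ 2)) t := by
      simpa [div_eq_mul_inv, mul_comm, neg_div] using
        ((hasDerivAt_inv htne).const_mul α)
    simpa [sub_neg_eq_add] using (hasDerivAt_id' t).fun_sub h1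
  have hD : HasDerivAt (fun s => f s - (s - α / s) * f' s)
      (f' t - ((1 + α / t ^ 2) * f' t + (t - α / t) * f'' t)) t :=
    (hder1 t ht).sub (hA.mul (hder2 t ht))
  rw [hD.deriv]
  have hk : α * ((n : ℝ) - 2) = (k : ℝ) - 1 := by
    rw [hα]; exact div_mul_cancel₀ _ hn2
  field_simp
  rw [← hk]; ring
end
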